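/- Define the 2×2 matrices P₀ = I, P₁ = X, P₂ = Z, P₃ = XZ and T = (1/√2)[[1, −i],[1, i]]. Let U_P = Σ_{i<4} P_i ⊗ (H₄|i⟩⟨i|H₄†) ⊗ I₃ and U_T = Σ_{t<3} T^t ⊗ I₄ ⊗ (H₃|t⟩⟨t|H₃†), which are unitaries on ℂ²⊗ℂ⁴⊗ℂ³, and set W = U_P U_T. Then for every linear map E on M₂(ℂ) and every ρ ∈ M₂(ℂ), tr_{2,3}[ W† · ((E ⊗ id ⊗ id)( W (ρ ⊗ |0⟩⟨0| ⊗ |0⟩⟨0|) W† )) · W ] = (1/12) Σ_{t<3} Σ_{i<4} (P_i T^t)† · E( (P_i T^t) ρ (P_i T^t)† ) · (P_i T^t); i.e., the circuit realizes the uniform twirl of E by the twelve unitaries {P_i T^t : i < 4, t < 3}. -/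

import Mathlib

open Matrix
open scoped Kronecker BigOperators

/-- The `d × d` Fourier matrix, with entries `e^{2πi jk/d}/√d`. -/
noncomputable def fourierMat (d : ℕ) : Matrix (Fin d) (Fin d) ℂ :=
  Matrix.of fun j k : Fin d =>
    Complex.exp (2 * Real.pi * Complex.I * (j : ℕ) * (k : ℕ) / d) / (Real.sqrt d : ℂ)

/-- The Pauli matrix `X`. -/
noncomputable def pauliX : Matrix (Fin 2) (Fin 2) ℂ := !![0, 1; 1, 0]

/-- The Pauli matrix `Z`. -/
noncomputable def pauliZ : Matrix (Fin 2) (Fin 2) ℂ := !![1, 0; 0, -1]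

/-- The list of Pauli elements `P₀ = I`, `P₁ = X`, `P₂ = Z`, `P₃ = XZ`. -/
noncomputable def pauli : Fin 4 → Matrix (Fin 2) (Fin 2) ℂ :=
  ![1, pauliX, pauliZ, pauliX * pauliZ]

/-- The gate `T = (1/√2)[[1, −i],[1, i]]`. -/
noncomputable def gateT : Matrix (Fin 2) (Fin 2) ℂ :=
  ((Real.sqrt 2 : ℂ))⁻¹ • !![1, -Complex.I; 1, Complex.I]

/-- The action of `E ⊗ id ⊗ id` on `M₂(ℂ) ⊗ M₄(ℂ) ⊗ M₃(ℂ)`, acting as `E`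
on the first tensor factor and as the identity on the other two. -/
noncomputable def tensorMap3
    (E : Matrix (Fin 2) (Fin 2) ℂ →ₗ[ℂ] Matrix (Fin 2) (Fin 2) ℂ)
    (M : Matrix ((Fin 2 × Fin 4) × Fin 3) ((Fin 2 × Fin 4) × Fin 3) ℂ) :
    Matrix ((Fin 2 × Fin 4) × Fin 3) ((Fin 2 × Fin 4) × Fin 3) ℂ :=
  Matrix.of fun p q =>
    E (Matrix.of fun a b => M ((a, p.1.2), p.2) ((b, q.1.2), q.2)) p.1.1 q.1.1

/-- Partial trace over the second and third tensor factors. -/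
noncomputable def ptrace23
    (M : Matrix ((Fin 2 × Fin 4) × Fin 3) ((Fin 2 × Fin 4) × Fin 3) ℂ) :
    Matrix (Fin 2) (Fin 2) ℂ :=
  Matrix.of fun a b => ∑ m : Fin 4, ∑ n : Fin 3, M ((a, m), n) ((b, m), n)

lemma fourier_conjT_mul (d : ℕ) [NeZero d] :
    (fourierMat d)ᴴ * fourierMat d = 1 := by
  have hd0 : (d : ℂ) ≠ 0 := Nat.cast_ne_zero.mpr (NeZero.ne d)
  have hdR : (0:ℝ) ≤ (d:ℝ) := Nat.cast_nonneg d
  have hds : (Real.sqrt d : ℂ) * (Real.sqrt d : ℂ) = (d : ℂ) := by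
    rw [← Complex.ofReal_mul, Real.mul_self_sqrt hdR]; norm_cast
  ext j k
  set ζ : ℂ := Complex.exp (2 * Real.pi * Complex.I * (((k:ℤ) - (j:ℤ)) : ℂ) / d) with hζ
  have hterm : ∀ l : Fin d,
      star (fourierMat d l j) * fourierMat d l k = ζ ^ (l : ℕ) / d := by
    intro l
    simp only [fourierMat, of_apply, hζ]
    rw [star_div₀, Complex.star_def, ← Complex.exp_conj]
    have h1 : (starRingEnd ℂ) (2 * Real.pi * Complex.I * ((l:ℕ):ℂ) * ((j:ℕ):ℂ) / d)
        = -(2 * Real.pi * Complex.I * ((l:ℕ):ℂ) * ((j:ℕ):ℂ) / d) := by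
      simp [map_div₀, Complex.conj_I, map_ofNat]
      ring
    rw [h1]
    have hstar : (starRingEnd ℂ) ((Real.sqrt (d:ℝ) : ℝ) : ℂ) = ((Real.sqrt (d:ℝ) : ℝ) : ℂ) :=
      Complex.conj_ofReal _
    rw [hstar, div_mul_div_comm, ← Complex.exp_add, hds]
    congr 1
    rw [← Complex.exp_nat_mul]
    congr 1
    push_cast
    field_simp
    ring
  have hsum : ((fourierMat d)ᴴ * fourierMat d) j k = (∑ i ∈ Finset.range d, ζ ^ i) / d := by
    rw [mul_apply]
    simp only [conjTranspose_apply, RCLike.star_def]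
    calc (∑ l : Fin d, (starRingEnd ℂ) (fourierMat d l j) * fourierMat d l k)
        = ∑ l : Fin d, ζ ^ (l:ℕ) / d := Finset.sum_congr rfl fun l _ => hterm l
      _ = (∑ l : Fin d, ζ ^ (l:ℕ)) / d := by rw [Finset.sum_div]
      _ = (∑ i ∈ Finset.range d, ζ ^ i) / d := by rw [Fin.sum_univ_eq_sum_range]
  rw [hsum]
  by_cases hjk : j = k
  · subst hjk
    have : ζ = 1 := by simp [hζ]
    rw [this]
    simp [Finset.sum_const, hd0, one_apply_eq]
  · have hζd : ζ ^ d = 1 := by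
      rw [hζ, ← Complex.exp_nat_mul]
      have : (d:ℂ) * (2 * Real.pi * Complex.I * (((k:ℤ) - (j:ℤ)) : ℂ) / d)
          = ((k:ℤ) - (j:ℤ) : ℂ) * (2 * Real.pi * Complex.I) := by
        field_simp
      rw [this]
      exact_mod_cast Complex.exp_int_mul_two_pi_mul_I ((k:ℤ) - (j:ℤ))
    have hζ1 : ζ ≠ 1 := by
      intro h
      rw [hζ, Complex.exp_eq_one_iff] at h
      obtain ⟨n, hn⟩ := h
      have hπ : (2 * (Real.pi:ℂ) * Complex.I) ≠ 0 := by
        simp [Real.pi_ne_zero, Complex.I_ne_zero, Complex.ofReal_ne_zero]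
      have h2 : (((k:ℤ) - (j:ℤ)) : ℂ) = (n : ℂ) * d := by
        field_simp at hn
        have hn' : 2 * (Real.pi:ℂ) * Complex.I * ((((k:ℤ) - (j:ℤ)) : ℂ))
            = 2 * (Real.pi:ℂ) * Complex.I * ((n:ℂ) * d) := by linear_combination (2 * (Real.pi:ℂ) * Complex.I) * hn
        exact mul_left_cancel₀ hπ hn'
      have h3 : (k:ℤ) - (j:ℤ) = n * d := by exact_mod_cast h2
      have hk : (k:ℕ) < d := k.isLt
      have hj : (j:ℕ) < d := j.isLt
      have hne : (k:ℕ) ≠ (j:ℕ) := fun h => hjk (Fin.ext h.symm)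
      have hdvd : (d:ℤ) ∣ ((k:ℤ) - (j:ℤ)) := ⟨n, by rw [h3]; ring⟩
      have hz : ((k:ℤ) - (j:ℤ)) = 0 := by
        refine Int.eq_zero_of_dvd_of_natAbs_lt_natAbs hdvd ?_
        omega
      omega
    rw [geom_sum_eq hζ1, hζd]
    simp [one_apply_ne hjk]

lemma fourier_mul_conjT (d : ℕ) [NeZero d] : fourierMat d * (fourierMat d)ᴴ = 1 :=
  mul_eq_one_comm.mp (fourier_conjT_mul d)

noncomputable def QQ (d : ℕ) (i j : Fin d) : Matrix (Fin d) (Fin d) ℂ :=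
  fourierMat d * Matrix.single i j 1 * (fourierMat d)ᴴ

lemma fourier_cancel (d : ℕ) [NeZero d] (X : Matrix (Fin d) (Fin d) ℂ) :
    (fourierMat d)ᴴ * (fourierMat d * X) = X := by
  rw [← Matrix.mul_assoc, fourier_conjT_mul, Matrix.one_mul]

lemma QQ_mul (d : ℕ) [NeZero d] (i j k l : Fin d) :
    QQ d i j * QQ d k l = if j = k then QQ d i l else 0 := by
  unfold QQ
  have h : fourierMat d * Matrix.single i j 1 * (fourierMat d)ᴴ *
      (fourierMat d * Matrix.single k l 1 * (fourierMat d)ᴴ)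
      = fourierMat d * (Matrix.single i j 1 * Matrix.single k l 1) * (fourierMat d)ᴴ := by
    simp only [Matrix.mul_assoc]
    rw [fourier_cancel]
  rw [h]
  by_cases hjk : j = k
  · subst hjk
    rw [single_mul_single_same, one_mul, if_pos rfl]
  · rw [single_mul_single_of_ne (h := hjk), if_neg hjk, Matrix.mul_zero, Matrix.zero_mul]

lemma stdBasis_conjT (d : ℕ) (i j : Fin d) :
    (Matrix.single i j (1:ℂ))ᴴ = Matrix.single j i 1 := by
  ext a b
  by_cases h1 : j = a <;> by_cases h2 : i = b <;>
    simp [conjTranspose_apply, Matrix.single, h1, h2, and_comm]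

lemma QQ_conjT (d : ℕ) [NeZero d] (i j : Fin d) : (QQ d i j)ᴴ = QQ d j i := by
  unfold QQ
  rw [conjTranspose_mul, conjTranspose_mul, conjTranspose_conjTranspose, stdBasis_conjT]
  simp only [Matrix.mul_assoc]

lemma QQ_trace (d : ℕ) [NeZero d] (i j : Fin d) :
    trace (QQ d i j) = if i = j then 1 else 0 := by
  unfold QQ
  rw [trace_mul_cycle, fourier_conjT_mul, Matrix.one_mul]
  by_cases h : i = j
  · subst h; simp [trace, diag, Matrix.single]
  · simp [trace, diag, Matrix.single, h]
    exact fun h' => h h'.symm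

lemma QQ_mid (d : ℕ) [NeZero d] (i j : Fin d) :
    QQ d i i * Matrix.single (0 : Fin d) 0 1 * QQ d j j = ((d:ℂ))⁻¹ • QQ d i j := by
  have hds : (Real.sqrt d : ℂ) * (Real.sqrt d : ℂ) = (d : ℂ) := by
    rw [← Complex.ofReal_mul, Real.mul_self_sqrt (Nat.cast_nonneg d)]; norm_cast
  have hF0 : ∀ c : Fin d, fourierMat d 0 c = ((Real.sqrt (d:ℝ) : ℝ) : ℂ)⁻¹ := by
    intro c
    simp [fourierMat, Fin.val_zero, one_div]
  have hmid : (fourierMat d)ᴴ * Matrix.single (0 : Fin d) 0 1 * fourierMat d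
      = Matrix.of fun _ _ => ((d:ℂ))⁻¹ := by
    ext a b
    rw [Matrix.mul_assoc, mul_apply]
    rw [Finset.sum_eq_single (0 : Fin d)]
    · rw [conjTranspose_apply, single_mul_apply_same, one_mul, hF0 a, hF0 b]
      rw [star_inv₀, Complex.star_def, Complex.conj_ofReal, ← mul_inv, hds, of_apply]
    · intro x _ hx
      rw [single_mul_apply_of_ne _ _ _ _ _ hx, mul_zero]
    · intro h; exact absurd (Finset.mem_univ _) h
  have hee : Matrix.single i i (1:ℂ) * (Matrix.of fun _ _ => ((d:ℂ))⁻¹) * Matrix.single j j 1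
      = ((d:ℂ))⁻¹ • Matrix.single i j 1 := by
    ext a b
    by_cases ha : i = a <;> by_cases hb : j = b
    · subst ha; subst hb
      rw [Matrix.mul_assoc, single_mul_apply_same, mul_single_apply_same]
      simp
    · rw [mul_single_apply_of_ne _ _ _ _ _ (fun hh => hb hh.symm)]
      simp [Matrix.single, hb]
    · rw [Matrix.mul_assoc, single_mul_apply_of_ne _ _ _ _ _ (fun hh => ha hh.symm)]
      simp [Matrix.single, ha]
    · rw [mul_single_apply_of_ne _ _ _ _ _ (fun hh => hb hh.symm)]
      simp [Matrix.single, hb]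
  calc QQ d i i * Matrix.single (0 : Fin d) 0 1 * QQ d j j
      = fourierMat d * (Matrix.single i i 1 *
          ((fourierMat d)ᴴ * Matrix.single (0 : Fin d) 0 1 * fourierMat d) *
          Matrix.single j j 1) * (fourierMat d)ᴴ := by
        unfold QQ; simp only [Matrix.mul_assoc]
    _ = ((d:ℂ))⁻¹ • QQ d i j := by
        rw [hmid, hee]
        unfold QQ
        rw [Matrix.mul_smul, Matrix.smul_mul]

lemma kron_conjT {l m n p : Type*} (A : Matrix l m ℂ) (B : Matrix n p ℂ) :
    (A ⊗ₖ B)ᴴ = Aᴴ ⊗ₖ Bᴴ := by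
  ext ⟨a, b⟩ ⟨c, e⟩
  simp [conjTranspose_apply, Matrix.kroneckerMap_apply, star_mul', mul_comm]

lemma tensorMap3_kron (E : Matrix (Fin 2) (Fin 2) ℂ →ₗ[ℂ] Matrix (Fin 2) (Fin 2) ℂ)
    (A : Matrix (Fin 2) (Fin 2) ℂ) (B : Matrix (Fin 4) (Fin 4) ℂ)
    (C : Matrix (Fin 3) (Fin 3) ℂ) :
    tensorMap3 E (A ⊗ₖ B ⊗ₖ C) = (E A) ⊗ₖ B ⊗ₖ C := by
  ext ⟨⟨a, m⟩, n⟩ ⟨⟨b, m'⟩, n'⟩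
  show E (Matrix.of fun x y => (A x y * B m m') * C n n') a b = (E A a b * B m m') * C n n'
  have h : (Matrix.of fun x y => (A x y * B m m') * C n n') = (B m m' * C n n') • A := by
    ext x y; simp [Matrix.of_apply]; ring
  rw [h, _root_.map_smul]
  simp [Matrix.smul_apply]
  ring

lemma tensorMap3_sum (E : Matrix (Fin 2) (Fin 2) ℂ →ₗ[ℂ] Matrix (Fin 2) (Fin 2) ℂ)
    {ι : Type*} (s : Finset ι)
    (f : ι → Matrix ((Fin 2 × Fin 4) × Fin 3) ((Fin 2 × Fin 4) × Fin 3) ℂ) :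
    tensorMap3 E (∑ x ∈ s, f x) = ∑ x ∈ s, tensorMap3 E (f x) := by
  ext p q
  show E (Matrix.of fun a b => (∑ x ∈ s, f x) _ _) p.1.1 q.1.1 = _
  have h : (Matrix.of fun a b => (∑ x ∈ s, f x) ((a, p.1.2), p.2) ((b, q.1.2), q.2))
      = ∑ x ∈ s, Matrix.of fun a b => f x ((a, p.1.2), p.2) ((b, q.1.2), q.2) := by
    ext a b; simp [Matrix.sum_apply]
  rw [h, map_sum]
  simp [Matrix.sum_apply, tensorMap3]

lemma tensorMap3_smul (E : Matrix (Fin 2) (Fin 2) ℂ →ₗ[ℂ] Matrix (Fin 2) (Fin 2) ℂ)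
    (c : ℂ) (M : Matrix ((Fin 2 × Fin 4) × Fin 3) ((Fin 2 × Fin 4) × Fin 3) ℂ) :
    tensorMap3 E (c • M) = c • tensorMap3 E M := by
  ext p q
  show E (Matrix.of fun a b => (c • M) _ _) p.1.1 q.1.1 = _
  have h : (Matrix.of fun a b => (c • M) ((a, p.1.2), p.2) ((b, q.1.2), q.2))
      = c • Matrix.of fun a b => M ((a, p.1.2), p.2) ((b, q.1.2), q.2) := by
    ext a b; simp
  rw [h, _root_.map_smul]
  simp [tensorMap3]

lemma ptrace23_sum {ι : Type*} (s : Finset ι)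
    (f : ι → Matrix ((Fin 2 × Fin 4) × Fin 3) ((Fin 2 × Fin 4) × Fin 3) ℂ) :
    ptrace23 (∑ x ∈ s, f x) = ∑ x ∈ s, ptrace23 (f x) := by
  ext a b
  simp only [ptrace23, Matrix.of_apply, Matrix.sum_apply]
  calc ∑ m : Fin 4, ∑ n : Fin 3, ∑ x ∈ s, f x ((a, m), n) ((b, m), n)
      = ∑ m : Fin 4, ∑ x ∈ s, ∑ n : Fin 3, f x ((a, m), n) ((b, m), n) :=
        Finset.sum_congr rfl fun m _ => Finset.sum_comm
    _ = ∑ x ∈ s, ∑ m : Fin 4, ∑ n : Fin 3, f x ((a, m), n) ((b, m), n) := Finset.sum_comm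

lemma ptrace23_smul (c : ℂ) (M : Matrix ((Fin 2 × Fin 4) × Fin 3) ((Fin 2 × Fin 4) × Fin 3) ℂ) :
    ptrace23 (c • M) = c • ptrace23 M := by
  ext a b
  simp [ptrace23, Finset.mul_sum]

lemma ptrace23_kron (A : Matrix (Fin 2) (Fin 2) ℂ) (B : Matrix (Fin 4) (Fin 4) ℂ)
    (C : Matrix (Fin 3) (Fin 3) ℂ) :
    ptrace23 (A ⊗ₖ B ⊗ₖ C) = (trace B * trace C) • A := by
  ext a b
  simp only [ptrace23, Matrix.of_apply, Matrix.kroneckerMap_apply, Matrix.smul_apply,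
    trace, diag, smul_eq_mul]
  rw [Finset.sum_mul, Finset.sum_mul]
  refine Finset.sum_congr rfl fun m _ => ?_
  rw [Finset.mul_sum, Finset.sum_mul]
  refine Finset.sum_congr rfl fun n _ => ?_
  ring

lemma ptrace23_zero : ptrace23 0 = 0 := by
  ext a b
  simp [ptrace23]

set_option maxHeartbeats 2000000 in
theorem stmt3
    (UP UT W : Matrix ((Fin 2 × Fin 4) × Fin 3) ((Fin 2 × Fin 4) × Fin 3) ℂ)
    (hUP : UP = ∑ i : Fin 4,
      (pauli i) ⊗ₖ (fourierMat 4 * Matrix.single i i 1 * (fourierMat 4)ᴴ) ⊗ₖ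
        (1 : Matrix (Fin 3) (Fin 3) ℂ))
    (hUT : UT = ∑ t : Fin 3,
      (gateT ^ (t : ℕ)) ⊗ₖ (1 : Matrix (Fin 4) (Fin 4) ℂ) ⊗ₖ
        (fourierMat 3 * Matrix.single t t 1 * (fourierMat 3)ᴴ))
    (hW : W = UP * UT)
    (E : Matrix (Fin 2) (Fin 2) ℂ →ₗ[ℂ] Matrix (Fin 2) (Fin 2) ℂ)
    (ρ : Matrix (Fin 2) (Fin 2) ℂ) :
    ptrace23
      (Wᴴ * tensorMap3 E
        (W * (ρ ⊗ₖ Matrix.single (0 : Fin 4) (0 : Fin 4) 1 ⊗ₖ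
                Matrix.single (0 : Fin 3) (0 : Fin 3) 1) * Wᴴ) * W)
      = (1 / 12 : ℂ) •
          ∑ t : Fin 3, ∑ i : Fin 4,
            (pauli i * gateT ^ (t : ℕ))ᴴ *
              E ((pauli i * gateT ^ (t : ℕ)) * ρ * (pauli i * gateT ^ (t : ℕ))ᴴ) *
              (pauli i * gateT ^ (t : ℕ)) := by
  set PT : Fin 4 → Fin 3 → Matrix (Fin 2) (Fin 2) ℂ :=
    fun i t => pauli i * gateT ^ (t : ℕ) with hPT
  have hUP' : UP = ∑ i : Fin 4, pauli i ⊗ₖ QQ 4 i i ⊗ₖ (1 : Matrix (Fin 3) (Fin 3) ℂ) := hUP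
  have hUT' : UT = ∑ t : Fin 3,
      (gateT ^ (t : ℕ)) ⊗ₖ (1 : Matrix (Fin 4) (Fin 4) ℂ) ⊗ₖ QQ 3 t t := hUT
  have hW2 : W = ∑ i : Fin 4, ∑ t : Fin 3, PT i t ⊗ₖ QQ 4 i i ⊗ₖ QQ 3 t t := by
    rw [hW, hUP', hUT', Finset.sum_mul_sum]
    refine Finset.sum_congr rfl fun i _ => Finset.sum_congr rfl fun t _ => ?_
    rw [← Matrix.mul_kronecker_mul, ← Matrix.mul_kronecker_mul, Matrix.mul_one, Matrix.one_mul]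
  have hWH : Wᴴ = ∑ i : Fin 4, ∑ t : Fin 3, (PT i t)ᴴ ⊗ₖ QQ 4 i i ⊗ₖ QQ 3 t t := by
    rw [hW2]
    rw [Matrix.conjTranspose_sum]
    refine Finset.sum_congr rfl fun i _ => ?_
    rw [Matrix.conjTranspose_sum]
    refine Finset.sum_congr rfl fun t _ => ?_
    rw [kron_conjT, kron_conjT, QQ_conjT, QQ_conjT]
  have hptW : ∀ X, ptrace23 (Wᴴ * X * W) = ptrace23 (Wᴴ * X * W) := fun _ => rfl
  -- the conjugation-and-trace collapse
  have hconj : ∀ (B : Matrix (Fin 2) (Fin 2) ℂ) (i i' : Fin 4) (t t' : Fin 3),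
      ptrace23 (Wᴴ * (B ⊗ₖ QQ 4 i i' ⊗ₖ QQ 3 t t') * W)
        = if i = i' ∧ t = t' then (PT i t)ᴴ * B * PT i' t' else 0 := by
    intro B i i' t t'
    rw [hWH, hW2]
    simp only [Finset.sum_mul, Finset.mul_sum, ptrace23_sum]
    have hterm : ∀ (j j' : Fin 4) (s s' : Fin 3),
        ptrace23 ((PT j s)ᴴ ⊗ₖ QQ 4 j j ⊗ₖ QQ 3 s s * (B ⊗ₖ QQ 4 i i' ⊗ₖ QQ 3 t t') *
            (PT j' s' ⊗ₖ QQ 4 j' j' ⊗ₖ QQ 3 s' s'))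
          = if j = i then (if s = t then (if j' = i' then (if s' = t' then
              (trace (QQ 4 i i') * trace (QQ 3 t t')) • ((PT i t)ᴴ * B * PT i' t')
              else 0) else 0) else 0) else 0 := by
      intro j j' s s'
      simp only [← Matrix.mul_kronecker_mul]
      by_cases h1 : j = i <;> by_cases h2 : s = t <;> by_cases h3 : j' = i' <;>
        by_cases h4 : s' = t' <;>
        simp [h1, h2, h3, h4, QQ_mul, ptrace23_kron, ptrace23_zero, Matrix.zero_kronecker,
          Matrix.kronecker_zero, Matrix.trace_zero, Ne.symm]
    calc (∑ j' : Fin 4, ∑ s' : Fin 3, ∑ j : Fin 4, ∑ s : Fin 3,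
          ptrace23 ((PT j s)ᴴ ⊗ₖ QQ 4 j j ⊗ₖ QQ 3 s s * (B ⊗ₖ QQ 4 i i' ⊗ₖ QQ 3 t t') *
            (PT j' s' ⊗ₖ QQ 4 j' j' ⊗ₖ QQ 3 s' s')))
        = ∑ j' : Fin 4, ∑ s' : Fin 3, ∑ j : Fin 4, ∑ s : Fin 3,
            (if j = i then (if s = t then (if j' = i' then (if s' = t' then
              (trace (QQ 4 i i') * trace (QQ 3 t t')) • ((PT i t)ᴴ * B * PT i' t')
              else 0) else 0) else 0) else 0) := by
          refine Finset.sum_congr rfl fun j' _ => Finset.sum_congr rfl fun s' _ =>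
            Finset.sum_congr rfl fun j _ => Finset.sum_congr rfl fun s _ => hterm j j' s s'
      _ = (trace (QQ 4 i i') * trace (QQ 3 t t')) • ((PT i t)ᴴ * B * PT i' t') := by
          simp [Finset.sum_ite_eq, Finset.sum_ite_eq']
      _ = if i = i' ∧ t = t' then (PT i t)ᴴ * B * PT i' t' else 0 := by
          rw [QQ_trace, QQ_trace]
          by_cases h1 : i = i' <;> by_cases h2 : t = t' <;> simp [h1, h2]
  -- the state after W
  have hstate : W * (ρ ⊗ₖ Matrix.single (0 : Fin 4) (0 : Fin 4) 1 ⊗ₖ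
        Matrix.single (0 : Fin 3) (0 : Fin 3) 1) * Wᴴ
      = ∑ i' : Fin 4, ∑ t' : Fin 3, ∑ i : Fin 4, ∑ t : Fin 3,
          ((12 : ℂ))⁻¹ • ((PT i t * ρ * (PT i' t')ᴴ) ⊗ₖ QQ 4 i i' ⊗ₖ QQ 3 t t') := by
    rw [hWH, hW2]
    simp only [Finset.sum_mul, Finset.mul_sum]
    refine Finset.sum_congr rfl fun i' _ => Finset.sum_congr rfl fun t' _ =>
      Finset.sum_congr rfl fun i _ => Finset.sum_congr rfl fun t _ => ?_
    simp only [← Matrix.mul_kronecker_mul, QQ_mid]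
    simp only [Matrix.kronecker_smul, Matrix.smul_kronecker, smul_smul]
    congr 1
    norm_num
  rw [hstate]
  simp only [tensorMap3_sum, tensorMap3_smul, tensorMap3_kron]
  simp only [Finset.mul_sum, Finset.sum_mul, Matrix.mul_smul, Matrix.smul_mul,
    ptrace23_sum, ptrace23_smul, hconj]
  simp only [smul_ite, smul_zero, ite_and, Finset.sum_ite_eq, Finset.sum_ite_eq',
    Finset.mem_univ, if_true]
  rw [Finset.sum_comm]
  rw [show (1/12 : ℂ) = (12:ℂ)⁻¹ by norm_num, Finset.smul_sum]
  refine Finset.sum_congr rfl fun t _ => ?_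
  rw [Finset.smul_sum]
  refine Finset.sum_congr rfl fun i _ => ?_
  simp [hPT]
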